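/- (Classically correlated mediator achieving the direct-interaction speed, Eq. (14)) Let Z be the Pauli matrix Z = |0⟩⟨0| − |1⟩⟨1| on ℂ² and define M = (1/2)( Z ⊗ I ⊗ Z + I ⊗ Z ⊗ Z ) on ℂ² ⊗ ℂ² ⊗ ℂ². Let |±⟩ = (e₀ ± e₁)/√2, ψ_m = (|+⟩⊗|−⟩ + |−⟩⊗|+⟩)/√2, ψ̃_m = (|−⟩⊗|−⟩ + |+⟩⊗|+⟩)/√2, and ρ(0) = (1/2)|ψ_m⟩⟨ψ_m| ⊗ |0⟩⟨0| + (1/2)|ψ̃_m⟩⟨ψ̃_m| ⊗ |1⟩⟨1|. For t ∈ [0, π/4] let ρ_{AB}(t) = tr_C( exp(−itM) ρ(0) exp(itM) ). Then: (i) ρ_{AB}(0) is separable; (ii) the negativity of ρ_{AB}(t) with respect to the bipartition A : B equals sin t · cos t; and (iii) at t = π/4, ρ_{AB}(π/4) is pure (tr ρ_{AB}(π/4)² = 1) and has negativity 1/2, i.e., the principal qubits are maximally entangled at the optimal direct-interaction time arccos(1/√2) = π/4. -/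

import Mathlib

open scoped Matrix Kronecker ComplexOrder

noncomputable section

/-- Hermitian inner product on `n → ℂ` (conjugate-linear in the first argument). -/
def cinner {n : Type*} [Fintype n] (v w : n → ℂ) : ℂ :=
  ∑ i, (starRingEnd ℂ) (v i) * w i

/-- Tensor (Kronecker) product of vectors. -/
def tensorVec {α β : Type*} (v : α → ℂ) (w : β → ℂ) : α × β → ℂ :=
  fun p => v p.1 * w p.2

/-- The projector `|v⟩⟨v|`. -/
def vecProj {n : Type*} (v : n → ℂ) : Matrix n n ℂ :=
  Matrix.of fun i j => v i * (starRingEnd ℂ) (v j)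

/-- A density matrix: positive semidefinite with unit trace. -/
def IsDensityMatrix {n : Type*} [Fintype n] (ρ : Matrix n n ℂ) : Prop :=
  ρ.PosSemidef ∧ ρ.trace = 1

open Classical in
/-- Positive semidefinite square root (0 on non-PSD input). -/
def msqrt {n : Type*} [Fintype n] [DecidableEq n] (ρ : Matrix n n ℂ) : Matrix n n ℂ :=
  if h : ρ.PosSemidef then
    (h.1.eigenvectorUnitary : Matrix n n ℂ) *
      Matrix.diagonal ((↑) ∘ (Real.sqrt ·) ∘ h.1.eigenvalues) *
      (star h.1.eigenvectorUnitary : Matrix n n ℂ)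
  else 0

/-- Uhlmann root fidelity `F(ρ,σ) = tr √(√ρ σ √ρ)`. -/
def rootFidelity {n : Type*} [Fintype n] [DecidableEq n] (ρ σ : Matrix n n ℂ) : ℝ :=
  ((msqrt (msqrt ρ * σ * msqrt ρ)).trace).re

/-- Partial trace over the second tensor factor. -/
def ptraceC {α γ : Type*} [Fintype γ] (ρ : Matrix (α × γ) (α × γ) ℂ) : Matrix α α ℂ :=
  Matrix.of fun i j => ∑ k, ρ (i, k) (j, k)

/-- Partial trace over the first tensor factor. -/
def ptraceA {α β : Type*} [Fintype α] (ρ : Matrix (α × β) (α × β) ℂ) : Matrix β β ℂ :=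
  Matrix.of fun i j => ∑ k, ρ (k, i) (k, j)

/-- Partial transpose on the second tensor factor. -/
def ptB {α β : Type*} (ρ : Matrix (α × β) (α × β) ℂ) : Matrix (α × β) (α × β) ℂ :=
  Matrix.of fun p q => ρ (p.1, q.2) (q.1, p.2)

open Classical in
/-- Negativity: the sum of the absolute values of the negative eigenvalues of
the partial transpose (0 if the partial transpose is not Hermitian). -/
def negativity {α β : Type*} [Fintype α] [Fintype β] [DecidableEq α] [DecidableEq β]
    (ρ : Matrix (α × β) (α × β) ℂ) : ℝ :=
  if h : (ptB ρ).IsHermitian then ∑ i, max 0 (- h.eigenvalues i) else 0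

/-- A family of vectors is an orthonormal basis family (orthonormal, indexed by the
same finite type as the dimension, hence a basis). -/
def IsONB {n : Type*} [Fintype n] [DecidableEq n] (x : n → n → ℂ) : Prop :=
  ∀ j k, cinner (x j) (x k) = if j = k then 1 else 0

/-- Separability: a finite convex combination of projectors onto product unit vectors. -/
def IsSeparableDM {α β : Type*} [Fintype α] [Fintype β]
    (ρ : Matrix (α × β) (α × β) ℂ) : Prop :=
  ∃ (m : ℕ) (p : Fin m → ℝ) (a : Fin m → α → ℂ) (b : Fin m → β → ℂ),
    (∀ j, 0 ≤ p j) ∧ (∑ j, p j = 1) ∧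
    (∀ j, cinner (a j) (a j) = 1) ∧ (∀ j, cinner (b j) (b j) = 1) ∧
    ρ = ∑ j, (p j : ℂ) • vecProj (tensorVec (a j) (b j))

/-- A maximally entangled state on `ℂ^d ⊗ ℂ^d`. -/
def IsMaxEnt {d : ℕ} (Ψ : Fin d × Fin d → ℂ) : Prop :=
  ∃ x y : Fin d → Fin d → ℂ, IsONB x ∧ IsONB y ∧
    Ψ = ((Real.sqrt d : ℂ)⁻¹) • ∑ j, tensorVec (x j) (y j)

/-- Standard basis vector `e₀` of `ℂ²`. -/
def qe0 : Fin 2 → ℂ := ![1, 0]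

/-- Standard basis vector `e₁` of `ℂ²`. -/
def qe1 : Fin 2 → ℂ := ![0, 1]

/-- Pauli `X` matrix. -/
def pX : Matrix (Fin 2) (Fin 2) ℂ := !![0, 1; 1, 0]

/-- Pauli `Y` matrix. -/
def pY : Matrix (Fin 2) (Fin 2) ℂ := !![0, -Complex.I; Complex.I, 0]

/-- Pauli `Z` matrix. -/
def pZ : Matrix (Fin 2) (Fin 2) ℂ := !![1, 0; 0, -1]

/-- `|+⟩ = (e₀ + e₁)/√2`. -/
def qplus : Fin 2 → ℂ := (((Real.sqrt 2 : ℝ) : ℂ))⁻¹ • (qe0 + qe1)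

/-- `|−⟩ = (e₀ − e₁)/√2`. -/
def qminus : Fin 2 → ℂ := (((Real.sqrt 2 : ℝ) : ℂ))⁻¹ • (qe0 - qe1)

/-- `ψ_m = (|+−⟩ + |−+⟩)/√2`. -/
def ψm : Fin 2 × Fin 2 → ℂ :=
  (((Real.sqrt 2 : ℝ) : ℂ))⁻¹ • (tensorVec qplus qminus + tensorVec qminus qplus)

/-- `ψ̃_m = (|−−⟩ + |++⟩)/√2`. -/
def ψtm : Fin 2 × Fin 2 → ℂ :=
  (((Real.sqrt 2 : ℝ) : ℂ))⁻¹ • (tensorVec qminus qminus + tensorVec qplus qplus)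

/-- The classically correlated initial state
`ρ(0) = ½|ψ_m⟩⟨ψ_m| ⊗ |0⟩⟨0| + ½|ψ̃_m⟩⟨ψ̃_m| ⊗ |1⟩⟨1|`. -/
def ρcls : Matrix ((Fin 2 × Fin 2) × Fin 2) ((Fin 2 × Fin 2) × Fin 2) ℂ :=
  (2⁻¹ : ℂ) • (vecProj ψm ⊗ₖ vecProj qe0) + (2⁻¹ : ℂ) • (vecProj ψtm ⊗ₖ vecProj qe1)

/-- The Hamiltonian `M = (Z ⊗ I ⊗ Z + I ⊗ Z ⊗ Z)/2`. -/
def Mcls : Matrix ((Fin 2 × Fin 2) × Fin 2) ((Fin 2 × Fin 2) × Fin 2) ℂ :=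
  (2⁻¹ : ℂ) • ((pZ ⊗ₖ (1 : Matrix (Fin 2) (Fin 2) ℂ)) ⊗ₖ pZ +
    ((1 : Matrix (Fin 2) (Fin 2) ℂ) ⊗ₖ pZ) ⊗ₖ pZ)

/-- The reduced state of `AB` at time `t`. -/
def ρABcls (t : ℝ) : Matrix (Fin 2 × Fin 2) (Fin 2 × Fin 2) ℂ :=
  ptraceC (NormedSpace.exp ((-(Complex.I * (t : ℂ))) • Mcls) * ρcls *
    NormedSpace.exp ((Complex.I * (t : ℂ)) • Mcls))


open Polynomial in
theorem charpoly_unitary_conj {n : Type*} [Fintype n] [DecidableEq n] (U D : Matrix n n ℂ)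
    (hU : U ∈ Matrix.unitaryGroup n ℂ) :
    (U * D * star U).charpoly = D.charpoly := by
  have hmul : (C : ℂ →+* ℂ[X]).mapMatrix U * (C : ℂ →+* ℂ[X]).mapMatrix (star U) = 1 := by
    rw [← _root_.map_mul, Matrix.mem_unitaryGroup_iff.mp hU, _root_.map_one]
  have hmul' : (C : ℂ →+* ℂ[X]).mapMatrix (star U) * (C : ℂ →+* ℂ[X]).mapMatrix U = 1 := by
    rw [← _root_.map_mul, Matrix.mem_unitaryGroup_iff'.mp hU, _root_.map_one]
  have hsc : (Matrix.scalar n) (X : ℂ[X]) = (X : ℂ[X]) • (1 : Matrix n n ℂ[X]) := by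
    ext i j
    by_cases h : i = j <;>
      simp [Matrix.scalar_apply, Matrix.diagonal_apply, Matrix.one_apply, h]
  have h1 : Matrix.charmatrix (U * D * star U) =
      (C : ℂ →+* ℂ[X]).mapMatrix U * Matrix.charmatrix D *
        (C : ℂ →+* ℂ[X]).mapMatrix (star U) := by
    simp only [Matrix.charmatrix, mul_sub, sub_mul]
    congr 1
    · rw [hsc, mul_smul_comm, smul_mul_assoc, mul_one, hmul]
    · simp only [RingHom.mapMatrix_apply, ← Matrix.map_mul]
  rw [Matrix.charpoly, Matrix.charpoly, h1, Matrix.det_mul, Matrix.det_mul, mul_comm,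
    ← mul_assoc, ← Matrix.det_mul, hmul', Matrix.det_one, one_mul]

open Polynomial in
theorem herm_charpoly {n : Type*} [Fintype n] [DecidableEq n] {A : Matrix n n ℂ}
    (hA : A.IsHermitian) :
    A.charpoly = ∏ i, (X - C (hA.eigenvalues i : ℂ)) := by
  have hd : (Matrix.diagonal (RCLike.ofReal ∘ hA.eigenvalues : n → ℂ)).charpoly
      = ∏ i, (X - C (hA.eigenvalues i : ℂ)) := by
    rw [Matrix.charpoly]
    have : Matrix.charmatrix (Matrix.diagonal (RCLike.ofReal ∘ hA.eigenvalues : n → ℂ))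
        = Matrix.diagonal fun i => X - C (hA.eigenvalues i : ℂ) := by
      ext i j
      by_cases h : i = j <;> simp [h, Matrix.charmatrix_apply, Matrix.diagonal_apply]
    rw [this, Matrix.det_diagonal]
  rw [← hd]
  conv_lhs => rw [hA.spectral_theorem]
  exact charpoly_unitary_conj _ _ (hA.eigenvectorUnitary).2

open Polynomial in
theorem eig_multiset {n : Type*} [Fintype n] [DecidableEq n] {A : Matrix n n ℂ}
    (hA : A.IsHermitian) (m : Multiset ℂ)
    (h : A.charpoly = (m.map fun a => X - C a).prod) :
    (Finset.univ.val.map fun i => ((hA.eigenvalues i : ℂ))) = m := by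
  have h2 : ((Finset.univ.val.map fun i => ((hA.eigenvalues i : ℂ))).map fun a => X - C a).prod
      = (m.map fun a => X - C a).prod := by
    rw [Multiset.map_map, ← h, herm_charpoly hA, Finset.prod_eq_multiset_prod]
    rfl
  have h3 := congrArg Polynomial.roots h2
  rwa [Polynomial.roots_multiset_prod_X_sub_C, Polynomial.roots_multiset_prod_X_sub_C] at h3

/-- diagonal eigenvalue vector of `Mcls` -/
def zv : Fin 2 → ℂ := ![1, -1]

def dfun : (Fin 2 × Fin 2) × Fin 2 → ℂ :=
  fun p => (zv p.1.1 * zv p.2 + zv p.1.2 * zv p.2) / 2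

theorem Mcls_eq : Mcls = Matrix.diagonal dfun := by
  have hz : pZ = Matrix.diagonal zv := by
    ext i j
    fin_cases i <;> fin_cases j <;> simp [pZ, zv, Matrix.diagonal_apply]
  have ho : (1 : Matrix (Fin 2) (Fin 2) ℂ) = Matrix.diagonal (fun _ => (1:ℂ)) := by
    simp [Matrix.diagonal_one]
  rw [Mcls, hz, ho, Matrix.diagonal_kronecker_diagonal, Matrix.diagonal_kronecker_diagonal,
    Matrix.diagonal_kronecker_diagonal, Matrix.diagonal_kronecker_diagonal]
  ext i j
  by_cases h : i = j
  · subst h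
    simp [Matrix.diagonal_apply_eq, dfun]
    ring
  · simp [Matrix.diagonal_apply_ne _ h, h]

theorem exp_diag (c : ℂ) :
    NormedSpace.exp (c • Mcls) =
      Matrix.diagonal (fun p => Complex.exp (c * dfun p)) := by
  rw [Mcls_eq, ← Matrix.diagonal_smul, Matrix.exp_diagonal]
  have : NormedSpace.exp (c • dfun) = fun p => Complex.exp (c * dfun p) := by
    funext p
    rw [Pi.coe_exp, Pi.smul_apply, smul_eq_mul, Complex.exp_eq_exp_ℂ]
  rw [this]



/-- outer product |u><w| -/
def outer {n : Type*} (u w : n → ℂ) : Matrix n n ℂ :=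
  Matrix.of fun i j => u i * (starRingEnd ℂ) (w j)

theorem vecProj_smul {n : Type*} (c : ℂ) (v : n → ℂ) :
    vecProj (c • v) = (c * (starRingEnd ℂ) c) • vecProj v := by
  ext i j
  simp [vecProj, Matrix.smul_apply]
  ring

theorem vecProj_sub {n : Type*} (u w : n → ℂ) :
    vecProj (u - w) = vecProj u + vecProj w - outer u w - outer w u := by
  ext i j
  simp [vecProj, outer, Matrix.add_apply, Matrix.sub_apply]
  ring

theorem vecProj_add {n : Type*} (u w : n → ℂ) :
    vecProj (u + w) = vecProj u + vecProj w + outer u w + outer w u := by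
  ext i j
  simp [vecProj, outer, Matrix.add_apply]
  ring

theorem sqrt2_mul_self : ((Real.sqrt 2 : ℝ) : ℂ) * ((Real.sqrt 2 : ℝ) : ℂ) = 2 := by
  norm_cast
  exact Real.mul_self_sqrt (by norm_num)

theorem sqrt2_ne : ((Real.sqrt 2 : ℝ) : ℂ) ≠ 0 := by
  have h := sqrt2_mul_self
  intro h0
  rw [h0] at h
  norm_num at h

theorem hψm : ψm = (((Real.sqrt 2 : ℝ) : ℂ))⁻¹ •
    (tensorVec qe0 qe0 - tensorVec qe1 qe1) := by
  have h0 := sqrt2_ne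
  have hs2 := sqrt2_mul_self
  funext p
  fin_cases p <;>
    simp [ψm, tensorVec, qplus, qminus, qe0, qe1] <;>
    field_simp <;>
    first
      | linear_combination (-1 : ℂ) * hs2
      | linear_combination (((Real.sqrt 2 : ℝ) : ℂ)) * hs2
      | linear_combination (-2 : ℂ) * hs2
      | linear_combination (((Real.sqrt 2 : ℝ) : ℂ) - 1) * hs2
      | linear_combination hs2
      | ring

theorem hψtm : ψtm = (((Real.sqrt 2 : ℝ) : ℂ))⁻¹ •
    (tensorVec qe0 qe0 + tensorVec qe1 qe1) := by
  have h0 := sqrt2_ne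
  have hs2 := sqrt2_mul_self
  funext p
  fin_cases p <;>
    simp [ψtm, tensorVec, qplus, qminus, qe0, qe1] <;>
    field_simp <;>
    first
      | linear_combination (-1 : ℂ) * hs2
      | linear_combination (((Real.sqrt 2 : ℝ) : ℂ)) * hs2
      | linear_combination (-2 : ℂ) * hs2
      | linear_combination (((Real.sqrt 2 : ℝ) : ℂ) - 1) * hs2
      | linear_combination hs2
      | ring

theorem hconj2 : ((((Real.sqrt 2 : ℝ) : ℂ))⁻¹ * (starRingEnd ℂ) ((((Real.sqrt 2 : ℝ) : ℂ))⁻¹))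
    = 2⁻¹ := by
  have h0 := sqrt2_ne
  have hs2 := sqrt2_mul_self
  rw [map_inv₀, Complex.conj_ofReal]
  field_simp
  first
    | linear_combination (-1 : ℂ) * hs2
    | linear_combination (-2 : ℂ) * hs2
    | linear_combination hs2
    | ring

theorem hVm : vecProj ψm = (2⁻¹ : ℂ) •
    (vecProj (tensorVec qe0 qe0) + vecProj (tensorVec qe1 qe1)
      - outer (tensorVec qe0 qe0) (tensorVec qe1 qe1)
      - outer (tensorVec qe1 qe1) (tensorVec qe0 qe0)) := by
  rw [hψm, vecProj_smul, hconj2, vecProj_sub]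

theorem hVtm : vecProj ψtm = (2⁻¹ : ℂ) •
    (vecProj (tensorVec qe0 qe0) + vecProj (tensorVec qe1 qe1)
      + outer (tensorVec qe0 qe0) (tensorVec qe1 qe1)
      + outer (tensorVec qe1 qe1) (tensorVec qe0 qe0)) := by
  rw [hψtm, vecProj_smul, hconj2, vecProj_add]

/-- the explicit reduced AB state with coherence parameter `s` -/
def Rm (s : ℝ) : Matrix (Fin 2 × Fin 2) (Fin 2 × Fin 2) ℂ :=
  (2⁻¹ : ℂ) • vecProj (tensorVec qe0 qe0) + (2⁻¹ : ℂ) • vecProj (tensorVec qe1 qe1)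
  + (Complex.I * s / 2) • outer (tensorVec qe0 qe0) (tensorVec qe1 qe1)
  - (Complex.I * s / 2) • outer (tensorVec qe1 qe1) (tensorVec qe0 qe0)

set_option maxHeartbeats 1000000 in
theorem rho_eq (t : ℝ) : ρABcls t = Rm (Real.sin (2 * t)) := by
  have he : Complex.exp (Complex.I * t) * Complex.exp (-(Complex.I * t)) = 1 := by
    rw [← Complex.exp_add]; simp
  have h2 : Complex.exp (Complex.I * t) ^ 2 - Complex.exp (-(Complex.I * t)) ^ 2
      = 2 * Complex.sin ((t : ℂ) * 2) * Complex.I := by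
    rw [← Complex.exp_nat_mul, ← Complex.exp_nat_mul]
    have e1 : ((2 : ℕ) : ℂ) * (Complex.I * t) = ((t : ℂ) * 2) * Complex.I := by push_cast; ring
    have e2 : ((2 : ℕ) : ℂ) * -(Complex.I * t) = (-((t : ℂ) * 2)) * Complex.I := by
      push_cast; ring
    rw [e1, e2, Complex.exp_mul_I, Complex.exp_mul_I, Complex.cos_neg, Complex.sin_neg]
    ring
  rw [ρABcls, exp_diag, exp_diag, ρcls, hVm, hVtm]
  ext p q
  simp only [ptraceC, Matrix.of_apply, Matrix.mul_diagonal, Matrix.diagonal_mul]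
  fin_cases p <;> fin_cases q <;>
    · simp [Rm, vecProj, outer, tensorVec, qe0, qe1, dfun, zv, Fin.sum_univ_two,
        Matrix.kroneckerMap_apply, Matrix.add_apply, Matrix.sub_apply, Matrix.smul_apply]
      try ring_nf
      try linear_combination (1/2 : ℂ) * he
      try linear_combination (1/4 : ℂ) * h2
      try linear_combination (-(1/4) : ℂ) * h2


/-- explicit partial transpose of `Rm s` -/
def Tm (s : ℝ) : Matrix (Fin 2 × Fin 2) (Fin 2 × Fin 2) ℂ :=
  (2⁻¹ : ℂ) • vecProj (tensorVec qe0 qe0) + (2⁻¹ : ℂ) • vecProj (tensorVec qe1 qe1)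
  + (Complex.I * s / 2) • outer (tensorVec qe0 qe1) (tensorVec qe1 qe0)
  - (Complex.I * s / 2) • outer (tensorVec qe1 qe0) (tensorVec qe0 qe1)

set_option maxHeartbeats 1000000 in
theorem ptB_Rm (s : ℝ) : ptB (Rm s) = Tm s := by
  ext p q
  fin_cases p <;> fin_cases q <;>
    simp [ptB, Rm, Tm, vecProj, outer, tensorVec, qe0, qe1,
      Matrix.add_apply, Matrix.sub_apply, Matrix.smul_apply]

theorem Tm_herm (s : ℝ) : (Tm s).IsHermitian := by
  rw [Matrix.IsHermitian]
  ext p q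
  fin_cases p <;> fin_cases q <;>
    · simp [Tm, vecProj, outer, tensorVec, qe0, qe1, Matrix.conjTranspose_apply,
        Matrix.add_apply, Matrix.sub_apply, Matrix.smul_apply]
      try ring

/-- explicit reindexing equivalence -/
def e4 : (Fin 2 × Fin 2) ≃ Fin 4 where
  toFun := fun p => ![![0, 1], ![2, 3]] p.1 p.2
  invFun := fun i => ![(0, 0), (0, 1), (1, 0), (1, 1)] i
  left_inv := by decide
  right_inv := by decide

open Polynomial in
theorem Tm_charpoly (s : ℝ) : (Tm s).charpoly =
    ((({(2⁻¹ : ℂ), (2⁻¹ : ℂ), ((s : ℂ) / 2), (-((s : ℂ) / 2))} : Multiset ℂ)).map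
      fun a => X - C a).prod := by
  have hM4 : (Matrix.reindex e4 e4 (Tm s)) =
      !![2⁻¹, 0, 0, 0; 0, 0, Complex.I * s / 2, 0; 0, -(Complex.I * s / 2), 0, 0;
        0, 0, 0, 2⁻¹] := by
    ext i j
    fin_cases i <;> fin_cases j <;>
      · simp [e4, Tm, vecProj, outer, tensorVec, qe0, qe1, Matrix.reindex_apply,
          Matrix.submatrix_apply, Matrix.add_apply, Matrix.sub_apply, Matrix.smul_apply,
          Matrix.vecHead, Matrix.vecTail]
        try ring
  have hc : Matrix.charmatrix (!![(2⁻¹ : ℂ), 0, 0, 0; 0, 0, Complex.I * s / 2, 0;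
        0, -(Complex.I * s / 2), 0, 0; 0, 0, 0, 2⁻¹]) =
      !![X - C (2⁻¹ : ℂ), 0, 0, 0; 0, X, -C (Complex.I * s / 2), 0;
        0, C (Complex.I * s / 2), X, 0; 0, 0, 0, X - C (2⁻¹ : ℂ)] := by
    ext i j
    fin_cases i <;> fin_cases j <;>
      simp [Matrix.charmatrix_apply, Matrix.diagonal_apply, Matrix.vecHead, Matrix.vecTail]
  have hC : C (Complex.I * (s : ℂ) * (1 / 2)) * C (Complex.I * (s : ℂ) * (1 / 2))
      = -(C ((s : ℂ) * (1 / 2)) * C ((s : ℂ) * (1 / 2))) := by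
    rw [← map_mul, ← map_mul, ← map_neg]
    congr 1
    have h := Complex.I_mul_I
    linear_combination ((s : ℂ) * (s : ℂ) * (1 / 4)) * h
  rw [← Matrix.charpoly_reindex e4, Matrix.charpoly, hM4, hc]
  simp [Matrix.det_succ_row_zero, Fin.sum_univ_succ, Multiset.insert_eq_cons]
  ring_nf
  first
    | (left; linear_combination ((X : ℂ[X]) - C (1 / 2 : ℂ)) * hC)
    | linear_combination ((X : ℂ[X]) - C (1 / 2 : ℂ)) * hC

theorem neg_Rm (s : ℝ) (hs : 0 ≤ s) : negativity (Rm s) = s / 2 := by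
  have hH : (ptB (Rm s)).IsHermitian := by rw [ptB_Rm]; exact Tm_herm s
  have hcp : (ptB (Rm s)).charpoly =
      ((({(2⁻¹ : ℂ), (2⁻¹ : ℂ), ((s : ℂ) / 2), (-((s : ℂ) / 2))} : Multiset ℂ)).map
        fun a => Polynomial.X - Polynomial.C a).prod := by
    rw [ptB_Rm]; exact Tm_charpoly s
  have em := eig_multiset hH _ hcp
  have em' : Finset.univ.val.map hH.eigenvalues
      = ({2⁻¹, 2⁻¹, s / 2, -(s / 2)} : Multiset ℝ) := by
    apply Multiset.map_injective (f := fun a : ℝ => (a : ℂ)) Complex.ofReal_injective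
    rw [Multiset.map_map]
    simp only [Function.comp_def]
    rw [em]
    simp [Multiset.insert_eq_cons]
  rw [negativity, dif_pos hH]
  have hsum : ∑ i, max 0 (-hH.eigenvalues i)
      = ((Finset.univ.val.map hH.eigenvalues).map fun x => max 0 (-x)).sum := by
    rw [Multiset.map_map]
    rfl
  rw [hsum, em']
  simp only [Multiset.insert_eq_cons, Multiset.map_cons, Multiset.map_singleton,
    Multiset.sum_cons, Multiset.sum_singleton]
  have h1 : max 0 (-(2⁻¹ : ℝ)) = 0 := by norm_num
  have h2 : max 0 (-(s / 2)) = 0 := max_eq_left (by linarith)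
  have h3 : max 0 (-(-(s / 2))) = s / 2 := by rw [neg_neg]; exact max_eq_right (by linarith)
  rw [h1, h2, h3]
  ring

theorem rm_sep : IsSeparableDM (Rm 0) := by
  refine ⟨2, ![1 / 2, 1 / 2], ![qe0, qe1], ![qe0, qe1], ?_, ?_, ?_, ?_, ?_⟩
  · intro j; fin_cases j <;> norm_num
  · simp [Fin.sum_univ_two]; norm_num
  · intro j; fin_cases j <;> simp [cinner, qe0, qe1, Fin.sum_univ_two]
  · intro j; fin_cases j <;> simp [cinner, qe0, qe1, Fin.sum_univ_two]
  · ext p q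
    fin_cases p <;> fin_cases q <;>
      · simp [Rm, vecProj, outer, tensorVec, qe0, qe1, Fin.sum_univ_two,
          Matrix.add_apply, Matrix.sub_apply, Matrix.smul_apply]
        try norm_num

theorem rm1_trace : (Rm 1 * Rm 1).trace = 1 := by
  simp [Matrix.trace, Matrix.mul_apply, Fintype.sum_prod_type, Fin.sum_univ_two,
    Matrix.diag_apply, Rm, vecProj, outer, tensorVec, qe0, qe1,
    Matrix.add_apply, Matrix.sub_apply, Matrix.smul_apply, Complex.I_mul_I]
  try ring_nf
  try simp [Complex.I_sq]
  try norm_num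

/-- classically correlated mediator achieving the direct-interaction
speed: the reduced state is initially separable, its negativity equals `sin t · cos t`,
and at `t = π/4 = arccos(1/√2)` it is pure and maximally entangled. -/
theorem classical_mediator_speed :
    IsSeparableDM (ρABcls 0) ∧
    (∀ t ∈ Set.Icc (0 : ℝ) (Real.pi / 4),
      negativity (ρABcls t) = Real.sin t * Real.cos t) ∧
    (ρABcls (Real.pi / 4) * ρABcls (Real.pi / 4)).trace = 1 ∧
    negativity (ρABcls (Real.pi / 4)) = 1 / 2 ∧
    Real.arccos (Real.sqrt 2)⁻¹ = Real.pi / 4 := by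
  have hpi4 : (2 : ℝ) * (Real.pi / 4) = Real.pi / 2 := by ring
  have hsin1 : Real.sin (2 * (Real.pi / 4)) = 1 := by rw [hpi4, Real.sin_pi_div_two]
  have hrho4 : ρABcls (Real.pi / 4) = Rm 1 := by rw [rho_eq, hsin1]
  refine ⟨?_, ?_, ?_, ?_, ?_⟩
  · have : ρABcls 0 = Rm 0 := by
      rw [rho_eq]
      norm_num
    rw [this]
    exact rm_sep
  · intro t ht
    obtain ⟨ht0, ht1⟩ := ht
    have hs : 0 ≤ Real.sin (2 * t) := by
      apply Real.sin_nonneg_of_nonneg_of_le_pi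
      · linarith
      · have := Real.pi_pos; linarith
    rw [rho_eq, neg_Rm _ hs, Real.sin_two_mul]
    ring
  · rw [hrho4]
    exact rm1_trace
  · rw [hrho4, neg_Rm 1 (by norm_num)]
    try norm_num
  · have hc : Real.cos (Real.pi / 4) = (Real.sqrt 2)⁻¹ := by
      have h2 : Real.sqrt 2 * Real.sqrt 2 = 2 := Real.mul_self_sqrt (by norm_num)
      have hne : Real.sqrt 2 ≠ 0 := by
        intro h; rw [h] at h2; norm_num at h2
      rw [Real.cos_pi_div_four]
      field_simp
      try linarith [h2]
    rw [← hc, Real.arccos_cos (by positivity) (by have := Real.pi_pos; linarith)]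

end
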